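/- For a binomial random variable X ~ Bin(n,p) and any natural number k, the probability that X ≥ k is at most e·(np)^k. -/
import Mathlib

/-- For a binomial random variable `X ~ Bin(n,p)` and any natural number `k`,
`P(X ≥ k) ≤ e · (np)^k`. -/
theorem binomial_tail_le (n : ℕ) (p : ℝ) (hp0 : 0 ≤ p) (hp1 : p ≤ 1) (k : ℕ) :
    ∑ j ∈ Finset.Icc k n, (n.choose j : ℝ) * p ^ j * (1 - p) ^ (n - j)
      ≤ Real.exp 1 * ((n : ℝ) * p) ^ k := by
  have h1p : (0:ℝ) ≤ 1 - p := by linarith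
  have hq0 : (0:ℝ) ≤ (n : ℝ) * p := by positivity
  have htermnn : ∀ j, (0:ℝ) ≤ (n.choose j : ℝ) * p ^ j * (1 - p) ^ (n - j) := by
    intro j; positivity
  rcases le_or_gt ((n : ℝ) * p) 1 with hq | hq
  · -- small np case: each term ≤ (np)^k / j!
    have hstep : ∀ j ∈ Finset.Icc k n,
        (n.choose j : ℝ) * p ^ j * (1 - p) ^ (n - j) ≤ ((n:ℝ)*p)^k * (1 / j.factorial) := by
      intro j hj
      rw [Finset.mem_Icc] at hj
      have h1 : (n.choose j : ℝ) * p ^ j * (1 - p) ^ (n - j) ≤ (n.choose j : ℝ) * p ^ j := by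
        have := pow_le_one₀ h1p (by linarith : 1 - p ≤ 1) (n := n - j)
        nlinarith [mul_nonneg (Nat.cast_nonneg (α := ℝ) (n.choose j)) (pow_nonneg hp0 j)]
      have h2 : (n.choose j : ℝ) * p ^ j ≤ ((n:ℝ)^j / j.factorial) * p ^ j := by
        exact mul_le_mul_of_nonneg_right (Nat.choose_le_pow_div j n) (pow_nonneg hp0 j)
      have h3 : ((n:ℝ)^j / j.factorial) * p ^ j = ((n:ℝ)*p)^j / j.factorial := by
        rw [mul_pow]; ring
      have h4 : ((n:ℝ)*p)^j ≤ ((n:ℝ)*p)^k :=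
        pow_le_pow_of_le_one hq0 hq hj.1
      have h5 : ((n:ℝ)*p)^j / j.factorial ≤ ((n:ℝ)*p)^k * (1 / j.factorial) := by
        rw [mul_one_div]
        exact div_le_div_of_nonneg_right h4 (by positivity) |>.trans_eq rfl
      linarith
    calc ∑ j ∈ Finset.Icc k n, (n.choose j : ℝ) * p ^ j * (1 - p) ^ (n - j)
        ≤ ∑ j ∈ Finset.Icc k n, ((n:ℝ)*p)^k * (1 / j.factorial) :=
          Finset.sum_le_sum hstep
      _ = ((n:ℝ)*p)^k * ∑ j ∈ Finset.Icc k n, (1 / (j.factorial : ℝ)) := by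
          rw [Finset.mul_sum]
      _ ≤ ((n:ℝ)*p)^k * Real.exp 1 := by
          apply mul_le_mul_of_nonneg_left _ (by positivity)
          calc ∑ j ∈ Finset.Icc k n, (1 / (j.factorial : ℝ))
              ≤ ∑ j ∈ Finset.range (n+1), (1 / (j.factorial : ℝ)) := by
                apply Finset.sum_le_sum_of_subset_of_nonneg
                · intro x hx
                  rw [Finset.mem_Icc] at hx
                  exact Finset.mem_range.2 (by omega)
                · intro i _ _; positivity
            _ ≤ Real.exp 1 := by
                have := Real.sum_le_exp_of_nonneg (x := 1) zero_le_one (n+1)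
                simpa using this
      _ = Real.exp 1 * ((n:ℝ)*p)^k := by ring
  · -- large np case: sum ≤ 1 ≤ e (np)^k
    have hsum1 : ∑ j ∈ Finset.Icc k n, (n.choose j : ℝ) * p ^ j * (1 - p) ^ (n - j) ≤ 1 := by
      calc ∑ j ∈ Finset.Icc k n, (n.choose j : ℝ) * p ^ j * (1 - p) ^ (n - j)
          ≤ ∑ j ∈ Finset.range (n+1), (n.choose j : ℝ) * p ^ j * (1 - p) ^ (n - j) := by
            apply Finset.sum_le_sum_of_subset_of_nonneg
            · intro x hx
              rw [Finset.mem_Icc] at hx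
              exact Finset.mem_range.2 (by omega)
            · intro i _ _; exact htermnn i
        _ = 1 := by
            have := add_pow p (1 - p) n
            simp only [add_sub_cancel, one_pow] at this
            rw [show (∑ j ∈ Finset.range (n+1), (n.choose j : ℝ) * p ^ j * (1 - p) ^ (n - j))
                = ∑ j ∈ Finset.range (n+1), p ^ j * (1 - p) ^ (n - j) * (n.choose j : ℝ) from
                Finset.sum_congr rfl (fun j _ => by ring), ← this]
    have hek : 1 ≤ Real.exp 1 * ((n:ℝ)*p)^k := by
      have h1 : (1:ℝ) ≤ ((n:ℝ)*p)^k := one_le_pow₀ hq.le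
      nlinarith [Real.one_le_exp (zero_le_one (α := ℝ))]
    linarith
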